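/- There are no integers $a,b,c,d,e,f,g$ with $b,c,d,e,f,g \geq 0$ such that the set of the twenty-seven integers $\{b+d+e+f+g+5,\; b+c+d+e+f+g+6,\; b+c+2d+e+f+g+7,\; b+c+2d+2e+f+g+8,\; b+c+2d+2e+2f+g+9,\; c+d+e+f+g+5,\; d+e+f+g+4,\; e+f+g+3,\; f+g+2,\; g+1,\; 2a+2b+3c+4d+3e+2f+g+17,\; a+2b+3c+4d+3e+2f+g+16,\; a+2b+2c+4d+3e+2f+g+15,\; a+2b+2c+3d+3e+2f+g+14,\; a+2b+2c+3d+2e+2f+g+13,\; a+2b+2c+3d+2e+f+g+12,\; a+b+2c+3d+3e+2f+g+13,\; a+b+2c+3d+2e+2f+g+12,\; a+b+2c+3d+2e+f+g+11,\; a+b+2c+2d+2e+2f+g+11,\; a+b+2c+2d+2e+f+g+10,\; a+b+2c+2d+e+f+g+9,\; a+b+c+2d+2e+2f+g+10,\; a+b+c+2d+2e+f+g+9,\; a+b+c+2d+e+f+g+8,\; a+b+c+d+e+f+g+7,\; a+c+d+e+f+g+6\}$ equals $\{1,2,\dots,27\}$. -/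

import Mathlib

set_option maxHeartbeats 2000000 in
private lemma stmt9_aux : ∀ a b c d e f g : ZMod 4,
    ¬ (18*a+27*b+36*c+54*d+45*e+36*f+27*g+243 = 378 ∧
       20*a^2 + 48*a*b + 68*a*c + 96*a*d + 76*a*e + 56*a*f + 36*a*g + 420*a + 39*b^2 + 96*b*c + 144*b*d + 114*b*e + 84*b*f + 54*b*g + 618*b + 68*c^2 + 192*c*d + 152*c*e + 112*c*f + 72*c*g + 828*c + 144*d^2 + 228*d*e + 168*d*f + 108*d*g + 1224*d + 95*e^2 + 140*e*f + 90*e*g + 990*e + 56*f^2 + 72*f*g + 744*f + 27*g^2 + 486*g + 2655 = 6930) := by decide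

set_option maxHeartbeats 1000000 in
theorem stmt9 :
    ¬ ∃ a b c d e f g : ℤ, 0 ≤ b ∧ 0 ≤ c ∧ 0 ≤ d ∧ 0 ≤ e ∧ 0 ≤ f ∧ 0 ≤ g ∧
      ({b+d+e+f+g+5, b+c+d+e+f+g+6, b+c+2*d+e+f+g+7, b+c+2*d+2*e+f+g+8, b+c+2*d+2*e+2*f+g+9, c+d+e+f+g+5, d+e+f+g+4, e+f+g+3, f+g+2, g+1, 2*a+2*b+3*c+4*d+3*e+2*f+g+17, a+2*b+3*c+4*d+3*e+2*f+g+16, a+2*b+2*c+4*d+3*e+2*f+g+15, a+2*b+2*c+3*d+3*e+2*f+g+14, a+2*b+2*c+3*d+2*e+2*f+g+13, a+2*b+2*c+3*d+2*e+f+g+12, a+b+2*c+3*d+3*e+2*f+g+13, a+b+2*c+3*d+2*e+2*f+g+12, a+b+2*c+3*d+2*e+f+g+11, a+b+2*c+2*d+2*e+2*f+g+11, a+b+2*c+2*d+2*e+f+g+10, a+b+2*c+2*d+e+f+g+9, a+b+c+2*d+2*e+2*f+g+10, a+b+c+2*d+2*e+f+g+9, a+b+c+2*d+e+f+g+8, a+b+c+d+e+f+g+7,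 a+c+d+e+f+g+6} : Set ℤ) = Set.Icc 1 27 := by
  rintro ⟨a, b, c, d, e, f, g, hb, hc, hd, he, hf, hg, hset⟩
  set L : List ℤ := [b+d+e+f+g+5, b+c+d+e+f+g+6, b+c+2*d+e+f+g+7, b+c+2*d+2*e+f+g+8, b+c+2*d+2*e+2*f+g+9, c+d+e+f+g+5, d+e+f+g+4, e+f+g+3, f+g+2, g+1, 2*a+2*b+3*c+4*d+3*e+2*f+g+17, a+2*b+3*c+4*d+3*e+2*f+g+16, a+2*b+2*c+4*d+3*e+2*f+g+15, a+2*b+2*c+3*d+3*e+2*f+g+14, a+2*b+2*c+3*d+2*e+2*f+g+13, a+2*b+2*c+3*d+2*e+f+g+12, a+b+2*c+3*d+3*e+2*f+g+13, a+b+2*c+3*d+2*e+2*f+g+12, a+b+2*c+3*d+2*e+f+g+11, a+b+2*c+2*d+2*e+2*f+g+11, a+b+2*c+2*d+2*e+f+g+10, a+b+2*c+2*d+e+f+g+9, a+b+c+2*d+2*e+2*f+g+10, a+b+c+2*d+2*e+f+g+9, a+b+c+2*d+e+f+g+8, a+b+c+d+e+f+g+7, a+c+d+e+f+g+6] with hL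
  have hT : L.toFinset = Finset.Icc 1 27 := by
    apply Finset.coe_injective
    rw [Finset.coe_Icc, ← hset, hL]
    simp only [List.toFinset_cons, List.toFinset_nil, insert_empty_eq, Finset.coe_insert,
      Finset.coe_singleton]
  have hcard : L.toFinset.card = 27 := by rw [hT]; simp [Int.card_Icc]
  have hnd : L.Nodup := by
    have := (Multiset.toFinset_card_eq_card_iff_nodup (m := (L : Multiset ℤ))).mp (by simpa [show L.length = 27 by rw [hL]; rfl] using hcard)
    simpa using this
  have hval : (↑L : Multiset ℤ) = (Finset.Icc (1:ℤ) 27).val :=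
    congrArg Finset.val ((List.toFinset_eq hnd).trans hT)
  have hsum : L.sum = 378 := by
    have h := congrArg Multiset.sum hval
    simpa [show ∑ x ∈ Finset.Icc (1:ℤ) 27, x = 378 by rfl] using h
  have hsq : (L.map (fun x => x^2)).sum = 6930 := by
    have h := congrArg (fun m : Multiset ℤ => (m.map (fun x => x^2)).sum) hval
    simpa [show ∑ x ∈ Finset.Icc (1:ℤ) 27, x ^ 2 = 6930 by rfl] using h
  simp only [hL, List.sum_cons, List.map_cons, List.map_nil, List.sum_nil, add_zero] at hsum hsq
  have h1 := congrArg (fun z : ℤ => (z : ZMod 4)) hsum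
  have h2 := congrArg (fun z : ℤ => (z : ZMod 4)) hsq
  push_cast at h1 h2
  exact stmt9_aux a b c d e f g ⟨by linear_combination h1, by linear_combination h2⟩
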